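/- Let (V₁, V₂, V₃) be pairwise commuting bounded linear operators on a complex Hilbert space H satisfying V₃*V₃ = I, V₂ = V₂*V₃, ‖V₂‖ ≤ 2 and V₁*V₁ = I − (1/4)V₂*V₂, and suppose moreover that (V₃*)ⁿx → 0 as n → ∞ for every x ∈ H (V₃ is a pure isometry). Let K be a complex Hilbert space and J : K → H a linear isometry whose range J(K) is invariant under V₁, V₂ and V₃. Define Wᵢ = J*VᵢJ for i = 1, 2, 3. Then W₁, W₂, W₃ are pairwise commuting, J ∘ Wᵢ = Vᵢ ∘ J for each i, W₃*W₃ = I_K, W₂ = W₂*W₃, ‖W₂‖ ≤ 2, W₁*W₁ = I_K − (1/4)W₂*W₂, and (W₃*)ⁿy → 0 as n → ∞ for every y ∈ K. In other words, (W₁, W₂, W₃) is again a pure pentablock isometry. -/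

import Mathlib

open ContinuousLinearMap Filter Topology

set_option maxHeartbeats 1000000

/-- The compression of a pure pentablock isometry `(V₁, V₂, V₃)` to the range of an
isometry `J` whose range is jointly invariant is again a pure pentablock isometry:
setting `Wᵢ = J* Vᵢ J`, the `Wᵢ` commute pairwise, `J` intertwines `Wᵢ` with `Vᵢ`,
`W₃*W₃ = I`, `W₂ = W₂*W₃`, `‖W₂‖ ≤ 2`, `W₁*W₁ = I - ¼ W₂*W₂` and `W₃` is pure. -/
theorem statement12 {H K : Type*}
    [NormedAddCommGroup H] [InnerProductSpace ℂ H] [CompleteSpace H]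
    [NormedAddCommGroup K] [InnerProductSpace ℂ K] [CompleteSpace K]
    (V₁ V₂ V₃ : H →L[ℂ] H)
    (h₁₂ : V₁ * V₂ = V₂ * V₁) (h₁₃ : V₁ * V₃ = V₃ * V₁) (h₂₃ : V₂ * V₃ = V₃ * V₂)
    (hiso : adjoint V₃ * V₃ = 1) (hΓ : V₂ = adjoint V₂ * V₃) (hb : ‖V₂‖ ≤ 2)
    (hpi : adjoint V₁ * V₁ = 1 - (1/4 : ℂ) • (adjoint V₂ * V₂))
    (hpure : ∀ x : H, Tendsto (fun n : ℕ => ‖((adjoint V₃) ^ n) x‖) atTop (𝓝 0))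
    (J : K →L[ℂ] H) (hJ : ∀ x : K, ‖J x‖ = ‖x‖)
    (hrange : ∀ x : K, V₁ (J x) ∈ Set.range J ∧ V₂ (J x) ∈ Set.range J ∧
      V₃ (J x) ∈ Set.range J) :
    ∀ W₁ W₂ W₃ : K →L[ℂ] K,
      W₁ = adjoint J ∘L (V₁ ∘L J) → W₂ = adjoint J ∘L (V₂ ∘L J) →
      W₃ = adjoint J ∘L (V₃ ∘L J) →
      (W₁ * W₂ = W₂ * W₁ ∧ W₁ * W₃ = W₃ * W₁ ∧ W₂ * W₃ = W₃ * W₂ ∧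
       (∀ x : K, J (W₁ x) = V₁ (J x) ∧ J (W₂ x) = V₂ (J x) ∧ J (W₃ x) = V₃ (J x)) ∧
       adjoint W₃ * W₃ = 1 ∧
       W₂ = adjoint W₂ * W₃ ∧ ‖W₂‖ ≤ 2 ∧
       adjoint W₁ * W₁ = 1 - (1/4 : ℂ) • (adjoint W₂ * W₂) ∧
       (∀ y : K, Tendsto (fun n : ℕ => ‖((adjoint W₃) ^ n) y‖) atTop (𝓝 0))) := by
  intro W₁ W₂ W₃ hW₁ hW₂ hW₃
  -- J preserves inner products
  have hinner : ∀ x y : K, (inner ℂ (J x) (J y) : ℂ) = inner ℂ x y := fun x y =>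
    LinearIsometry.inner_map_map ⟨J.toLinearMap, hJ⟩ x y
  -- J* J = 1
  have hJJ' : ∀ x : K, adjoint J (J x) = x := by
    intro x
    apply ext_inner_right ℂ
    intro y
    rw [adjoint_inner_left, hinner]
  -- J J* is identity on range J
  have hproj : ∀ y ∈ Set.range J, J (adjoint J y) = y := by
    rintro _ ⟨z, rfl⟩
    rw [hJJ']
  -- intertwining
  have hi₁ : ∀ x : K, J (W₁ x) = V₁ (J x) := by
    intro x; rw [hW₁]; exact hproj _ (hrange x).1
  have hi₂ : ∀ x : K, J (W₂ x) = V₂ (J x) := by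
    intro x; rw [hW₂]; exact hproj _ (hrange x).2.1
  have hi₃ : ∀ x : K, J (W₃ x) = V₃ (J x) := by
    intro x; rw [hW₃]; exact hproj _ (hrange x).2.2
  -- adjoint formulas
  have ha₁ : ∀ x : K, adjoint W₁ x = adjoint J (adjoint V₁ (J x)) := by
    intro x; rw [hW₁]; simp [adjoint_comp]
  have ha₂ : ∀ x : K, adjoint W₂ x = adjoint J (adjoint V₂ (J x)) := by
    intro x; rw [hW₂]; simp [adjoint_comp]
  have ha₃ : ∀ x : K, adjoint W₃ x = adjoint J (adjoint V₃ (J x)) := by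
    intro x; rw [hW₃]; simp [adjoint_comp]
  -- commutation
  have comm : ∀ (A B : H →L[ℂ] H) (WA WB : K →L[ℂ] K),
      (∀ x, J (WA x) = A (J x)) → (∀ x, J (WB x) = B (J x)) →
      WA = adjoint J ∘L (A ∘L J) → A * B = B * A → WA * WB = WB * WA := by
    intro A B WA WB hA hB hWA hAB
    ext x
    have h1 : (WA * WB) x = adjoint J (A (B (J x))) := by
      rw [ContinuousLinearMap.mul_apply, hWA]; simp only [comp_apply, hB]
    have h2 : (WB * WA) x = adjoint J (B (A (J x))) := by
      have hWB : WB = adjoint J ∘L (B ∘L J) := by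
        ext z
        have := hB z
        simp only [comp_apply]
        rw [← this, hJJ']
      rw [ContinuousLinearMap.mul_apply, hWB]; simp only [comp_apply, hA]
    rw [h1, h2]
    have := congrArg (fun T : H →L[ℂ] H => T (J x)) hAB
    simp only [ContinuousLinearMap.mul_apply] at this
    rw [this]
  refine ⟨comm V₁ V₂ W₁ W₂ hi₁ hi₂ hW₁ h₁₂,
    comm V₁ V₃ W₁ W₃ hi₁ hi₃ hW₁ h₁₃,
    comm V₂ V₃ W₂ W₃ hi₂ hi₃ hW₂ h₂₃,
    fun x => ⟨hi₁ x, hi₂ x, hi₃ x⟩, ?_, ?_, ?_, ?_, ?_⟩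
  · -- adjoint W₃ * W₃ = 1
    ext x
    have : adjoint W₃ (W₃ x) = adjoint J (adjoint V₃ (V₃ (J x))) := by
      rw [ha₃, hi₃]
    have h2 : adjoint V₃ (V₃ (J x)) = J x := by
      have := congrArg (fun T : H →L[ℂ] H => T (J x)) hiso
      simpa using this
    simp only [ContinuousLinearMap.mul_apply, ContinuousLinearMap.one_apply, this, h2, hJJ']
  · -- W₂ = adjoint W₂ * W₃
    ext x
    have h2 : adjoint V₂ (V₃ (J x)) = V₂ (J x) := by
      have := congrArg (fun T : H →L[ℂ] H => T (J x)) hΓ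
      simpa using this.symm
    have : (adjoint W₂ * W₃) x = adjoint J (adjoint V₂ (V₃ (J x))) := by
      rw [ContinuousLinearMap.mul_apply, ha₂, hi₃]
    rw [this, h2, hW₂]
    simp
  · -- norm bound
    apply opNorm_le_bound _ (by norm_num)
    intro x
    have h1 : ‖W₂ x‖ = ‖V₂ (J x)‖ := by rw [← hi₂ x, hJ]
    rw [h1, ← hJ x]
    exact le_trans (le_opNorm V₂ (J x)) (mul_le_mul_of_nonneg_right hb (norm_nonneg _))
  · -- adjoint W₁ * W₁ = 1 - ¼ W₂* W₂
    ext x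
    have h2 : adjoint V₁ (V₁ (J x)) = J x - (1/4 : ℂ) • (adjoint V₂ (V₂ (J x))) := by
      have := congrArg (fun T : H →L[ℂ] H => T (J x)) hpi
      simpa using this
    have h3 : (adjoint W₁ * W₁) x = adjoint J (adjoint V₁ (V₁ (J x))) := by
      rw [ContinuousLinearMap.mul_apply, ha₁, hi₁]
    have h4 : adjoint J (adjoint V₂ (V₂ (J x))) = (adjoint W₂ * W₂) x := by
      rw [ContinuousLinearMap.mul_apply, ha₂, hi₂]
    rw [h3, h2, map_sub, map_smul, hJJ', h4]
    simp [sub_apply, smul_apply]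
  · -- purity
    intro y
    have hstep : ∀ z : H, adjoint W₃ (adjoint J z) = adjoint J (adjoint V₃ z) := by
      intro z
      apply ext_inner_right ℂ
      intro w
      rw [adjoint_inner_left, adjoint_inner_left, hi₃, adjoint_inner_left,
        adjoint_inner_left]
    have hiter : ∀ n : ℕ, ∀ z : H,
        ((adjoint W₃) ^ n) (adjoint J z) = adjoint J (((adjoint V₃) ^ n) z) := by
      intro n
      induction n with
      | zero => intro z; simp
      | succ n ih =>
        intro z
        rw [pow_succ, ContinuousLinearMap.mul_apply, hstep, ih, ← ContinuousLinearMap.mul_apply, ← pow_succ]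
    have hnormJ : ∀ z : H, ‖adjoint J z‖ ≤ ‖z‖ := by
      intro z
      have : ‖adjoint J‖ ≤ 1 := by
        rw [LinearIsometryEquiv.norm_map adjoint J]
        exact opNorm_le_bound _ zero_le_one (fun x => by rw [hJ, one_mul])
      calc ‖adjoint J z‖ ≤ ‖adjoint J‖ * ‖z‖ := le_opNorm _ _
        _ ≤ 1 * ‖z‖ := mul_le_mul_of_nonneg_right this (norm_nonneg _)
        _ = ‖z‖ := one_mul _
    apply squeeze_zero (fun n => norm_nonneg _) _ (hpure (J y))
    intro n
    have : ((adjoint W₃) ^ n) y = adjoint J (((adjoint V₃) ^ n) (J y)) := by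
      rw [← hJJ' y, hiter, hJJ']
    rw [this]
    exact hnormJ _
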